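/- Let Q be an N×N Metzler matrix and D a diagonal matrix with positive diagonal entries. If the matrix Q·D^{-1} is Hurwitz stable (all eigenvalues have negative real part), then Q itself is Hurwitz stable. -/

import Mathlib

open Matrix
attribute [local instance] Matrix.linftyOpNormedRing Matrix.linftyOpNormedAlgebra

section Aux
variable {n : Type*} [Fintype n] [DecidableEq n]

lemma pow_entry_nonneg {x : Matrix n n ℝ} (hx : ∀ i j, 0 ≤ x i j) :
    ∀ (k : ℕ) (i j : n), 0 ≤ (x ^ k) i j := by
  intro k
  induction k with
  | zero => intro i j; rw [pow_zero]; by_cases h : i = j <;> simp [Matrix.one_apply, h]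
  | succ m ih =>
    intro i j
    rw [pow_succ, Matrix.mul_apply]
    exact Finset.sum_nonneg fun l _ => mul_nonneg (ih i l) (hx l j)

omit [DecidableEq n] in
lemma mul_entry_nonneg {x y : Matrix n n ℝ} (hx : ∀ i j, 0 ≤ x i j)
    (hy : ∀ i j, 0 ≤ y i j) (i j : n) : 0 ≤ (x * y) i j := by
  rw [Matrix.mul_apply]
  exact Finset.sum_nonneg fun l _ => mul_nonneg (hx i l) (hy l j)

lemma oneSub_right_inv_nonneg {x : Matrix n n ℝ} (hx : ∀ i j, 0 ≤ x i j) (hn : ‖x‖ < 1) :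
    ∃ B : Matrix n n ℝ, (1 - x) * B = 1 ∧ ∀ i j, 0 ≤ B i j := by
  refine ⟨∑' k : ℕ, x ^ k, (Units.oneSub x hn).val_inv, fun i j => ?_⟩
  have hsum : HasSum (fun k : ℕ => x ^ k) (∑' k : ℕ, x ^ k) :=
    (summable_geometric_of_norm_lt_one hn).hasSum
  have hc : Continuous fun A : Matrix n n ℝ => A i j := by
    exact (continuous_apply j).comp (continuous_apply i)
  have heval : HasSum (fun k : ℕ => (x ^ k) i j) ((∑' k : ℕ, x ^ k) i j) :=
    hsum.map (AddMonoidHom.mk' (fun A : Matrix n n ℝ => A i j) (fun _ _ => rfl)) hc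
  rw [← heval.tsum_eq]
  exact tsum_nonneg (fun k => pow_entry_nonneg hx k i j)

omit [Fintype n] in
lemma map_smul_one_sub (M : Matrix n n ℝ) (s : ℝ) :
    (s • (1:Matrix n n ℝ) - M).map Complex.ofReal
      = (s:ℂ) • (1:Matrix n n ℂ) - M.map Complex.ofReal := by
  ext i j
  by_cases h : i = j <;>
    simp [Matrix.map_apply, Matrix.sub_apply, Matrix.smul_apply, Matrix.one_apply, h]

lemma det_ne_of_spec (M : Matrix n n ℝ)
    (hH : ∀ μ ∈ spectrum ℂ (M.map Complex.ofReal), μ.re < 0) {s : ℝ} (hs : 0 ≤ s) :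
    (s • (1:Matrix n n ℝ) - M).det ≠ 0 := by
  intro h
  have hdetC : ((s:ℂ) • (1:Matrix n n ℂ) - M.map Complex.ofReal).det = 0 := by
    rw [← map_smul_one_sub M s]
    have : ((s • (1:Matrix n n ℝ) - M).map Complex.ofReal).det
        = Complex.ofReal ((s • (1:Matrix n n ℝ) - M).det) :=
      ((Complex.ofRealHom : ℝ →+* ℂ).map_det (s • (1:Matrix n n ℝ) - M)).symm
    rw [this, h, Complex.ofReal_zero]
  have hmem : (s:ℂ) ∈ spectrum ℂ (M.map Complex.ofReal) := by
    rw [spectrum.mem_iff, Algebra.algebraMap_eq_smul_one]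
    rw [Matrix.isUnit_iff_isUnit_det, hdetC]
    simp
  have := hH _ hmem
  simp at this
  linarith

/-- base case: for s large, (s•1 - M)⁻¹ has nonneg entries -/
lemma resolvent_nonneg_large (M : Matrix n n ℝ)
    (hM : ∀ i j, i ≠ j → 0 ≤ M i j) (c : ℝ) (hc : ∀ i, -M i i ≤ c) (hc0 : 0 ≤ c)
    {s : ℝ} (hs : ‖M + c • (1:Matrix n n ℝ)‖ + c < s) :
    ∀ i j, 0 ≤ ((s • (1:Matrix n n ℝ) - M)⁻¹) i j := by
  set A : Matrix n n ℝ := M + c • (1:Matrix n n ℝ) with hA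
  have hApos : ∀ i j, 0 ≤ A i j := by
    intro i j
    by_cases h : i = j
    · subst h; simp [hA, Matrix.smul_apply, Matrix.one_apply]; linarith [hc i]
    · simpa [hA, Matrix.smul_apply, Matrix.one_apply, h] using hM i j h
  have hsc : 0 < s + c := by
    have := norm_nonneg A; linarith
  set x : Matrix n n ℝ := (s + c)⁻¹ • A with hxdef
  have hxpos : ∀ i j, 0 ≤ x i j := fun i j => by
    have := hApos i j
    simp only [hxdef, Matrix.smul_apply, smul_eq_mul]
    positivity
  have hxnorm : ‖x‖ < 1 := by
    rw [hxdef, norm_smul]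
    rw [Real.norm_eq_abs, abs_of_pos (by positivity)]
    rw [inv_mul_lt_iff₀ hsc]
    nlinarith [norm_nonneg A]
  obtain ⟨B, hB1, hBpos⟩ := oneSub_right_inv_nonneg hxpos hxnorm
  have hkey : s • (1:Matrix n n ℝ) - M = (s + c) • ((1:Matrix n n ℝ) - x) := by
    rw [smul_sub, hxdef, smul_smul, mul_inv_cancel₀ (ne_of_gt hsc), one_smul, hA]
    rw [add_smul]
    abel
  have hinv : (s • (1:Matrix n n ℝ) - M) * ((s + c)⁻¹ • B) = 1 := by
    rw [hkey, Matrix.smul_mul, Matrix.mul_smul, hB1, smul_smul,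
      mul_inv_cancel₀ (ne_of_gt hsc), one_smul]
  rw [Matrix.inv_eq_right_inv hinv]
  intro i j
  simp only [Matrix.smul_apply, smul_eq_mul]
  have := hBpos i j
  positivity

/-- step: move left by h -/
lemma resolvent_nonneg_step (M : Matrix n n ℝ) {s h : ℝ}
    (hdet : (s • (1:Matrix n n ℝ) - M).det ≠ 0)
    (hR : ∀ i j, 0 ≤ ((s • (1:Matrix n n ℝ) - M)⁻¹) i j)
    (hh : 0 ≤ h) (hsmall : h * ‖(s • (1:Matrix n n ℝ) - M)⁻¹‖ < 1) :
    ∀ i j, 0 ≤ (((s - h) • (1:Matrix n n ℝ) - M)⁻¹) i j := by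
  set X : Matrix n n ℝ := s • (1:Matrix n n ℝ) - M with hX
  set R : Matrix n n ℝ := X⁻¹ with hRdef
  have hXR : X * R = 1 := Matrix.mul_nonsing_inv X (isUnit_iff_ne_zero.mpr hdet)
  have hxpos : ∀ i j, 0 ≤ (h • R) i j := fun i j => by
    simp only [Matrix.smul_apply, smul_eq_mul]
    exact mul_nonneg hh (hR i j)
  have hxnorm : ‖h • R‖ < 1 := by
    rw [norm_smul, Real.norm_eq_abs, abs_of_nonneg hh]; exact hsmall
  obtain ⟨B, hB1, hBpos⟩ := oneSub_right_inv_nonneg hxpos hxnorm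
  have hfact : (s - h) • (1:Matrix n n ℝ) - M = X * ((1:Matrix n n ℝ) - h • R) := by
    rw [Matrix.mul_sub, Matrix.mul_smul, hXR, mul_one, hX, sub_smul]
    abel
  have hinv : ((s - h) • (1:Matrix n n ℝ) - M) * (B * R) = 1 := by
    rw [hfact, Matrix.mul_assoc, ← Matrix.mul_assoc (1 - h • R), hB1, Matrix.one_mul, hXR]
  rw [Matrix.inv_eq_right_inv hinv]
  intro i j
  rw [Matrix.mul_apply]
  exact Finset.sum_nonneg fun l _ => mul_nonneg (hBpos i l) (hR l j)

lemma resolvent_nonneg (M : Matrix n n ℝ)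
    (hM : ∀ i j, i ≠ j → 0 ≤ M i j)
    (hH : ∀ μ ∈ spectrum ℂ (M.map Complex.ofReal), μ.re < 0) :
    ∀ s : ℝ, 0 ≤ s → ∀ i j, 0 ≤ ((s • (1:Matrix n n ℝ) - M)⁻¹) i j := by
  classical
  set c : ℝ := ∑ k, |M k k| with hcdef
  have hc0 : 0 ≤ c := Finset.sum_nonneg fun k _ => abs_nonneg _
  have hc : ∀ i, -M i i ≤ c := fun i =>
    le_trans (neg_le_abs _) (Finset.single_le_sum (fun k _ => abs_nonneg (M k k))
      (Finset.mem_univ i))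
  set s₁ : ℝ := ‖M + c • (1:Matrix n n ℝ)‖ + c + 1 with hs₁def
  have hs₁0 : 0 ≤ s₁ := by positivity
  have base : ∀ s : ℝ, s₁ ≤ s → ∀ i j, 0 ≤ ((s • (1:Matrix n n ℝ) - M)⁻¹) i j := by
    intro s hs
    exact resolvent_nonneg_large M hM c hc hc0 (by simp only [hs₁def] at hs; linarith)
  -- continuity of the resolvent on [0, s₁]
  set f : ℝ → Matrix n n ℝ := fun s => (s • (1:Matrix n n ℝ) - M)⁻¹ with hfdef
  have hgcont : Continuous fun s : ℝ => s • (1:Matrix n n ℝ) - M :=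
    (continuous_id.smul continuous_const).sub continuous_const
  have hfcont : ContinuousOn f (Set.Icc 0 s₁) := by
    have h1 : ContinuousOn (fun s : ℝ => ((s • (1:Matrix n n ℝ) - M).det)⁻¹) (Set.Icc 0 s₁) :=
      hgcont.matrix_det.continuousOn.inv₀ fun s hs =>
        det_ne_of_spec M hH hs.1
    have h2 : ContinuousOn (fun s : ℝ => (s • (1:Matrix n n ℝ) - M).adjugate) (Set.Icc 0 s₁) :=
      hgcont.matrix_adjugate.continuousOn
    have : f = fun s => ((s • (1:Matrix n n ℝ) - M).det)⁻¹ • (s • (1:Matrix n n ℝ) - M).adjugate := by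
      funext s
      show (s • (1:Matrix n n ℝ) - M)⁻¹ = _
      rw [Matrix.inv_def, Ring.inverse_eq_inv']
    rw [this]
    exact h1.smul h2
  obtain ⟨C, hC⟩ : ∃ C, ∀ s ∈ Set.Icc (0:ℝ) s₁, ‖f s‖ ≤ C :=
    (isCompact_Icc).exists_bound_of_continuousOn hfcont
  set C' : ℝ := max C 0 with hC'def
  have hC'0 : 0 ≤ C' := le_max_right _ _
  have hCle : ∀ s ∈ Set.Icc (0:ℝ) s₁, ‖f s‖ ≤ C' := fun s hs =>
    (hC s hs).trans (le_max_left _ _)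
  set δ : ℝ := (C' + 1)⁻¹ with hδdef
  have hδ0 : 0 < δ := by positivity
  have hδC : δ * C' < 1 := by
    rw [hδdef, inv_mul_lt_iff₀ (by positivity), mul_one]
    linarith
  have key : ∀ m : ℕ, ∀ s : ℝ, 0 ≤ s → s₁ ≤ s + m * δ → ∀ i j, 0 ≤ f s i j := by
    intro m
    induction m with
    | zero => intro s hs hle; exact base s (by simpa using hle)
    | succ m ih =>
      intro s hs hle i j
      by_cases hbig : s₁ ≤ s
      · exact base s hbig i j
      push_neg at hbig
      set s' : ℝ := min (s + δ) s₁ with hs'def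
      have hs'0 : 0 ≤ s' := le_min (by linarith) hs₁0
      have hs'mem : s' ∈ Set.Icc (0:ℝ) s₁ := ⟨hs'0, min_le_right _ _⟩
      have hss' : s ≤ s' := le_min (by linarith) (le_of_lt hbig)
      have hs'nonneg : ∀ i j, 0 ≤ f s' i j := by
        by_cases hcase : s + δ < s₁
        · have : s' = s + δ := min_eq_left (le_of_lt hcase)
          rw [this]
          exact ih (s + δ) (by linarith) (by push_cast; push_cast at hle; linarith)
        · push_neg at hcase
          have : s' = s₁ := min_eq_right hcase
          rw [this]
          exact base s₁ le_rfl
      have hh0 : 0 ≤ s' - s := by linarith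
      have hhδ : s' - s ≤ δ := by
        have : s' ≤ s + δ := min_le_left _ _
        linarith
      have hsmall : (s' - s) * ‖f s'‖ < 1 := by
        calc (s' - s) * ‖f s'‖ ≤ δ * C' := by
              apply mul_le_mul hhδ (hCle s' hs'mem) (norm_nonneg _) (le_of_lt hδ0)
          _ < 1 := hδC
      have := resolvent_nonneg_step M (det_ne_of_spec M hH hs'0) hs'nonneg hh0 hsmall i j
      simpa [show s' - (s' - s) = s by ring] using this
  intro s hs i j
  obtain ⟨m, hm⟩ := exists_nat_ge (s₁ / δ)
  refine key m s hs ?_ i j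
  have : s₁ / δ * δ ≤ m * δ := mul_le_mul_of_nonneg_right hm (le_of_lt hδ0)
  rw [div_mul_cancel₀ _ (ne_of_gt hδ0)] at this
  linarith

end Aux

section Aux2
variable {n : Type*} [Fintype n] [DecidableEq n]

/-- crux: a Hurwitz Metzler matrix admits no nonzero nonnegative `u` with `M u ≥ 0`. -/
lemma no_nonneg_subinvariant (M : Matrix n n ℝ)
    (hM : ∀ i j, i ≠ j → 0 ≤ M i j)
    (hH : ∀ μ ∈ spectrum ℂ (M.map Complex.ofReal), μ.re < 0)
    (u : n → ℝ) (hu : ∀ i, 0 ≤ u i) (hMu : ∀ i, 0 ≤ (M *ᵥ u) i) : u = 0 := by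
  have hdet : ((0:ℝ) • (1:Matrix n n ℝ) - M).det ≠ 0 := det_ne_of_spec M hH le_rfl
  have hR : ∀ i j, 0 ≤ (((0:ℝ) • (1:Matrix n n ℝ) - M)⁻¹) i j :=
    resolvent_nonneg M hM hH 0 le_rfl
  set X : Matrix n n ℝ := (0:ℝ) • (1:Matrix n n ℝ) - M with hX
  have hinv : X⁻¹ * X = 1 := Matrix.nonsing_inv_mul X (isUnit_iff_ne_zero.mpr hdet)
  have hu_eq : u = X⁻¹ *ᵥ (X *ᵥ u) := by
    rw [Matrix.mulVec_mulVec, hinv, Matrix.one_mulVec]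
  have hXu : ∀ j, (X *ᵥ u) j ≤ 0 := by
    intro j
    have : X *ᵥ u = -(M *ᵥ u) := by
      rw [hX, Matrix.sub_mulVec, zero_smul, Matrix.zero_mulVec, zero_sub]
    rw [this]
    simpa using hMu j
  funext i
  have hle : u i ≤ 0 := by
    rw [hu_eq]
    show ∑ j, X⁻¹ i j * (X *ᵥ u) j ≤ 0
    exact Finset.sum_nonpos fun j _ => mul_nonpos_of_nonneg_of_nonpos (hR i j) (hXu j)
  exact le_antisymm hle (hu i)

end Aux2

theorem stmt_7 (N : ℕ) (Q : Matrix (Fin N) (Fin N) ℝ) (θ : Fin N → ℝ)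
    (hθ : ∀ i, 0 < θ i)
    (hMetzler : ∀ i j, i ≠ j → 0 ≤ Q i j)
    (hHurwitz : ∀ μ ∈ spectrum ℂ
      ((Q * (Matrix.diagonal θ)⁻¹).map (Complex.ofReal)), μ.re < 0) :
    ∀ μ ∈ spectrum ℂ (Q.map (Complex.ofReal)), μ.re < 0 := by
  intro μ hμ
  by_contra hre
  push_neg at hre
  set M : Matrix (Fin N) (Fin N) ℝ := Q * (Matrix.diagonal θ)⁻¹ with hMdef
  have hθne : ∀ i, θ i ≠ 0 := fun i => ne_of_gt (hθ i)
  have hdiaginv : (Matrix.diagonal θ)⁻¹ = Matrix.diagonal (fun i => (θ i)⁻¹) := by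
    apply Matrix.inv_eq_right_inv
    rw [Matrix.diagonal_mul_diagonal]
    convert Matrix.diagonal_one using 2
    exact funext fun i => mul_inv_cancel₀ (hθne i)
  have hMentry : ∀ i j, M i j = Q i j * (θ j)⁻¹ := by
    intro i j
    rw [hMdef, hdiaginv, Matrix.mul_diagonal]
  have hMmetz : ∀ i j, i ≠ j → 0 ≤ M i j := by
    intro i j hij
    rw [hMentry]
    exact mul_nonneg (hMetzler i j hij) (inv_nonneg.mpr (le_of_lt (hθ j)))
  -- extract an eigenvector
  have hnu : ¬ IsUnit (μ • (1:Matrix (Fin N) (Fin N) ℂ) - Q.map Complex.ofReal) := by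
    rw [spectrum.mem_iff, Algebra.algebraMap_eq_smul_one] at hμ
    exact hμ
  have hdet0 : (μ • (1:Matrix (Fin N) (Fin N) ℂ) - Q.map Complex.ofReal).det = 0 := by
    by_contra h
    exact hnu ((Matrix.isUnit_iff_isUnit_det _).mpr (isUnit_iff_ne_zero.mpr h))
  obtain ⟨x, hx0, hx⟩ := (Matrix.exists_mulVec_eq_zero_iff).mpr hdet0
  have hvec : Q.map Complex.ofReal *ᵥ x = μ • x := by
    rw [Matrix.sub_mulVec, sub_eq_zero] at hx
    rw [← hx, Matrix.smul_mulVec, Matrix.one_mulVec]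
  have heig : ∀ i, ∑ j, (Q i j : ℂ) * x j = μ * x i := by
    intro i
    simpa [Matrix.mulVec, dotProduct, Matrix.map_apply] using congrFun hvec i
  set y : Fin N → ℂ := fun j => (θ j : ℂ) * x j with hydef
  have hθCne : ∀ j, (θ j : ℂ) ≠ 0 := fun j => Complex.ofReal_ne_zero.mpr (hθne j)
  have hy0 : y ≠ 0 := by
    intro h
    apply hx0
    funext j
    have hj := congrFun h j
    simp only [hydef, Pi.zero_apply, mul_eq_zero] at hj
    rcases hj with h1 | h2
    · exact absurd h1 (hθCne j)
    · exact h2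
  set u : Fin N → ℝ := fun i => ‖y i‖ with hudef
  have hu : ∀ i, 0 ≤ u i := fun i => norm_nonneg _
  have hMy : ∀ i, ∑ j, (M i j : ℂ) * y j = (μ / (θ i : ℂ)) * y i := by
    intro i
    have hterm : ∀ j, (M i j : ℂ) * y j = (Q i j : ℂ) * x j := by
      intro j
      rw [hMentry i j, hydef]
      push_cast
      rw [mul_assoc, ← mul_assoc ((θ j : ℂ)⁻¹) ((θ j : ℂ)) (x j),
        inv_mul_cancel₀ (hθCne j), one_mul]
    rw [Finset.sum_congr rfl fun j _ => hterm j, heig i, hydef]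
    rw [eq_comm, div_mul_eq_mul_div, div_eq_iff (hθCne i)]
    ring
  have key : ∀ i, (μ / (θ i:ℂ) - (M i i : ℂ)) * y i
      = ∑ j ∈ Finset.univ.erase i, (M i j : ℂ) * y j := by
    intro i
    have h1 := hMy i
    rw [← Finset.add_sum_erase _ _ (Finset.mem_univ i)] at h1
    generalize hν : μ / (θ i : ℂ) = ν at h1 ⊢
    rw [sub_mul]
    linear_combination -h1
  have hMu : ∀ i, 0 ≤ (M *ᵥ u) i := by
    intro i
    have habs : ‖(μ / (θ i:ℂ) - (M i i : ℂ)) * y i‖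
        ≤ ∑ j ∈ Finset.univ.erase i, M i j * u j := by
      rw [key i]
      refine le_trans (norm_sum_le _ _) (le_of_eq (Finset.sum_congr rfl ?_))
      intro j hj
      have hjne : j ≠ i := (Finset.mem_erase.mp hj).1
      rw [norm_mul, Complex.norm_real, Real.norm_eq_abs, abs_of_nonneg (hMmetz i j (Ne.symm hjne))]
    have hlow : (-(M i i)) * u i ≤ ‖(μ / (θ i:ℂ) - (M i i : ℂ)) * y i‖ := by
      rw [norm_mul]
      have h1 : -(M i i) ≤ ‖μ / (θ i:ℂ) - (M i i : ℂ)‖ := by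
        refine le_trans ?_ (Complex.re_le_norm _)
        rw [Complex.sub_re, Complex.div_ofReal_re, Complex.ofReal_re]
        have : 0 ≤ μ.re / θ i := div_nonneg hre (le_of_lt (hθ i))
        linarith
      exact mul_le_mul_of_nonneg_right h1 (hu i)
    have hsplit : (M *ᵥ u) i = M i i * u i + ∑ j ∈ Finset.univ.erase i, M i j * u j := by
      rw [Matrix.mulVec, dotProduct, ← Finset.add_sum_erase _ _ (Finset.mem_univ i)]
    rw [hsplit]
    have := le_trans hlow habs
    linarith
  have huz := no_nonneg_subinvariant M hMmetz hHurwitz u hu hMu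
  apply hy0
  funext i
  have : ‖y i‖ = 0 := congrFun huz i
  simpa using this
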